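/- arXiv:1710.07115 — 3 statements merged into one kernel-verified Lean document; each statement's English description precedes it below -/
import Mathlib

section
/- For the single-armed hidden-Markov bandit with subsidy (either the rested or the restless model), if the availability functions do not depend on the belief, i.e. θ^a(π,y) = θ^a(y) for all π, then for every fixed subsidy w the value functions V_S, V_NS, Ṽ_S, Ṽ_NS, V and Ṽ are convex functions of the belief π on [0,1]. -/
/-!
Single-armed hidden-Markov bandit with subsidy (rested or restless model).

`θ a y π` is the availability probability `θ^a(π, y)` where `a` is the action
(`true` = play), `y` is the current availability (`true` = available), and `π`
is the belief (probability that the hidden state is 0).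
-/

structure BanditParams where
  /-- `true` for the rested model, `false` for the restless model. -/
  rested : Bool
  β : ℝ
  η0 : ℝ
  r0 : ℝ
  η1 : ℝ
  r1 : ℝ
  μ0 : ℝ
  μ1 : ℝ
  θ : Bool → Bool → ℝ → ℝ

namespace BanditParams

variable (P : BanditParams)

/-- Expected immediate reward (= success probability) when playing an available arm. -/
noncomputable def ρ (π : ℝ) : ℝ := π * P.r0 + (1 - π) * P.r1

/-- Expected immediate reward when playing an unavailable arm. -/
noncomputable def ξ (π : ℝ) : ℝ := π * P.η0 + (1 - π) * P.η1

/-- Bayes belief update after a successful play of an available arm. -/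
noncomputable def γ11 (π : ℝ) : ℝ :=
  (π * P.r0 * P.μ0 + (1 - π) * P.r1 * P.μ1) / (π * P.r0 + (1 - π) * P.r1)

/-- Bayes belief update after an unsuccessful play of an available arm. -/
noncomputable def γ01 (π : ℝ) : ℝ :=
  (π * (1 - P.r0) * P.μ0 + (1 - π) * (1 - P.r1) * P.μ1) /
    (π * (1 - P.r0) + (1 - π) * (1 - P.r1))

/-- Belief update after a successful play of an unavailable arm. -/
noncomputable def γ10 (π : ℝ) : ℝ := if P.rested then π else P.γ11 π

/-- Belief update after an unsuccessful play of an unavailable arm. -/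
noncomputable def γ00 (π : ℝ) : ℝ := if P.rested then π else P.γ01 π

/-- Belief update when an available arm is not played. -/
noncomputable def Γ1 (π : ℝ) : ℝ := if P.rested then π else π * P.μ0 + (1 - π) * P.μ1

/-- Belief update when an unavailable arm is not played. -/
noncomputable def Γ0 (_P : BanditParams) (π : ℝ) : ℝ := π

/-- Standing assumptions on the model parameters. -/
structure Valid : Prop where
  hβ0 : 0 < P.β
  hβ1 : P.β < 1
  hη0 : 0 ≤ P.η0
  hη0r0 : P.η0 < P.r0
  hr0η1 : P.r0 < P.η1
  hη1r1 : P.η1 < P.r1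
  hr1 : P.r1 ≤ 1
  hμ0 : P.μ0 ∈ Set.Icc (0 : ℝ) 1
  hμ1 : P.μ1 ∈ Set.Icc (0 : ℝ) 1
  hθ : ∀ a y π, π ∈ Set.Icc (0 : ℝ) 1 → P.θ a y π ∈ Set.Icc (0 : ℝ) 1

/-- `VS, VNS, VtS, VtNS, V, Vt` form the (unique bounded) solution of the dynamic
program for subsidy `w`: `VS = V_S`, `VNS = V_NS`, `VtS = Ṽ_S`, `VtNS = Ṽ_NS`,
`V = max (V_S, V_NS)`, `Vt = max (Ṽ_S, Ṽ_NS)`. -/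
structure IsSolution (w : ℝ) (VS VNS VtS VtNS V Vt : ℝ → ℝ) : Prop where
  bounded : ∃ M, ∀ π ∈ Set.Icc (0 : ℝ) 1, |V π| ≤ M ∧ |Vt π| ≤ M
  eqVS : ∀ π ∈ Set.Icc (0 : ℝ) 1, VS π =
    P.ρ π + P.β * (P.ρ π * (P.θ true true π * V (P.γ11 π)
        + (1 - P.θ true true π) * Vt (P.γ11 π))
      + (1 - P.ρ π) * (P.θ true true π * V (P.γ01 π)
        + (1 - P.θ true true π) * Vt (P.γ01 π)))
  eqVNS : ∀ π ∈ Set.Icc (0 : ℝ) 1, VNS π =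
    w + P.β * (P.θ false true π * V (P.Γ1 π) + (1 - P.θ false true π) * Vt (P.Γ1 π))
  eqVtS : ∀ π ∈ Set.Icc (0 : ℝ) 1, VtS π =
    P.ξ π + P.β * (P.ρ π * (P.θ true false π * V (P.γ10 π)
        + (1 - P.θ true false π) * Vt (P.γ10 π))
      + (1 - P.ρ π) * (P.θ true false π * V (P.γ00 π)
        + (1 - P.θ true false π) * Vt (P.γ00 π)))
  eqVtNS : ∀ π ∈ Set.Icc (0 : ℝ) 1, VtNS π =
    w + P.β * (P.θ false false π * V (P.Γ0 π) + (1 - P.θ false false π) * Vt (P.Γ0 π))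
  eqV : ∀ π ∈ Set.Icc (0 : ℝ) 1, V π = max (VS π) (VNS π)
  eqVt : ∀ π ∈ Set.Icc (0 : ℝ) 1, Vt π = max (VtS π) (VtNS π)

end BanditParams

open Set BanditParams


namespace ConvAux

/-- Convexity transfers along equality on the set. -/
lemma convexOn_congr_on {f g : ℝ → ℝ} (h : ∀ x ∈ Icc (0:ℝ) 1, f x = g x)
    (hf : ConvexOn ℝ (Icc (0:ℝ) 1) f) : ConvexOn ℝ (Icc (0:ℝ) 1) g := by
  refine ⟨convex_Icc _ _, fun x hx y hy a b ha hb hab => ?_⟩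
  have hz : a • x + b • y ∈ Icc (0:ℝ) 1 := (convex_Icc (0:ℝ) 1) hx hy ha hb hab
  have key := hf.2 hx hy ha hb hab
  simp only [smul_eq_mul] at key hz ⊢
  rw [← h _ hz, ← h _ hx, ← h _ hy]
  exact key

lemma convexOn_affine (c d : ℝ) : ConvexOn ℝ (Icc (0:ℝ) 1) (fun π => c + d * π) := by
  refine ⟨convex_Icc _ _, fun x _ y _ a b _ _ hab => ?_⟩
  simp only [smul_eq_mul]
  apply le_of_eq
  linear_combination (-c) * hab

/-- Perspective-type inequality underlying convexity preservation under Bayes updates. -/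
lemma persp {g : ℝ → ℝ} (hg : ConvexOn ℝ (Icc (0:ℝ) 1) g)
    {s1 s2 c1 c2 a b : ℝ} (hs1 : 0 ≤ s1) (hs2 : 0 ≤ s2)
    (hc1 : c1 ∈ Icc (0:ℝ) 1) (hc2 : c2 ∈ Icc (0:ℝ) 1)
    (ha : 0 ≤ a) (hb : 0 ≤ b) (hab : a + b = 1) :
    (a * s1 + b * s2) * g ((a * (s1 * c1) + b * (s2 * c2)) / (a * s1 + b * s2))
      ≤ a * (s1 * g c1) + b * (s2 * g c2) := by
  have h1 : 0 ≤ a * s1 := mul_nonneg ha hs1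
  have h2 : 0 ≤ b * s2 := mul_nonneg hb hs2
  rcases eq_or_lt_of_le (by linarith : (0:ℝ) ≤ a * s1 + b * s2) with h0 | hpos
  · have e1 : a * s1 = 0 := by linarith
    have e2 : b * s2 = 0 := by linarith
    have r1 : a * (s1 * g c1) = 0 := by rw [← mul_assoc, e1, zero_mul]
    have r2 : b * (s2 * g c2) = 0 := by rw [← mul_assoc, e2, zero_mul]
    rw [← h0, zero_mul, r1, r2]
    norm_num
  · have hne : a * s1 + b * s2 ≠ 0 := ne_of_gt hpos
    have hw1 : 0 ≤ a * s1 / (a * s1 + b * s2) := div_nonneg h1 hpos.le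
    have hw2 : 0 ≤ b * s2 / (a * s1 + b * s2) := div_nonneg h2 hpos.le
    have hsum : a * s1 / (a * s1 + b * s2) + b * s2 / (a * s1 + b * s2) = 1 := by
      field_simp
    have key := hg.2 hc1 hc2 hw1 hw2 hsum
    simp only [smul_eq_mul] at key
    have harg : (a * (s1 * c1) + b * (s2 * c2)) / (a * s1 + b * s2)
        = (a * s1 / (a * s1 + b * s2)) * c1 + (b * s2 / (a * s1 + b * s2)) * c2 := by
      field_simp
    rw [harg]
    calc (a * s1 + b * s2) * g ((a * s1 / (a * s1 + b * s2)) * c1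
            + (b * s2 / (a * s1 + b * s2)) * c2)
        ≤ (a * s1 + b * s2) * ((a * s1 / (a * s1 + b * s2)) * g c1
            + (b * s2 / (a * s1 + b * s2)) * g c2) :=
          mul_le_mul_of_nonneg_left key hpos.le
      _ = a * (s1 * g c1) + b * (s2 * g c2) := by field_simp

/-- Convexity of `π ↦ s(π) g(u(π)/s(π))` with `s(π) = πp + (1-π)q`,
`u(π) = πpm₀ + (1-π)qm₁`. -/
lemma weight_comp {g : ℝ → ℝ} (hg : ConvexOn ℝ (Icc (0:ℝ) 1) g)
    {p q m0 m1 : ℝ} (hp : 0 ≤ p) (hq : 0 ≤ q)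
    (hm0 : m0 ∈ Icc (0:ℝ) 1) (hm1 : m1 ∈ Icc (0:ℝ) 1) :
    ConvexOn ℝ (Icc (0:ℝ) 1)
      (fun π => (π * p + (1 - π) * q) *
        g ((π * p * m0 + (1 - π) * q * m1) / (π * p + (1 - π) * q))) := by
  have props : ∀ t ∈ Icc (0:ℝ) 1,
      0 ≤ t * p + (1 - t) * q ∧
      (t * p * m0 + (1 - t) * q * m1) / (t * p + (1 - t) * q) ∈ Icc (0:ℝ) 1 ∧
      (t * p + (1 - t) * q) * ((t * p * m0 + (1 - t) * q * m1) / (t * p + (1 - t) * q))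
        = t * p * m0 + (1 - t) * q * m1 := by
    intro t ht
    obtain ⟨ht0, ht1⟩ := ht
    have h1 : 0 ≤ t * p := mul_nonneg ht0 hp
    have h2 : 0 ≤ (1 - t) * q := mul_nonneg (by linarith) hq
    have hS : 0 ≤ t * p + (1 - t) * q := by linarith
    rcases eq_or_lt_of_le hS with h0 | hpos
    · have e1 : t * p = 0 := by linarith
      have e2 : (1 - t) * q = 0 := by linarith
      have eU : t * p * m0 + (1 - t) * q * m1 = 0 := by rw [e1, e2]; ring
      refine ⟨hS, ?_, ?_⟩
      · rw [← h0, div_zero]; exact ⟨le_rfl, zero_le_one⟩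
      · rw [← h0, eU]; simp
    · have hU0 : 0 ≤ t * p * m0 + (1 - t) * q * m1 :=
        add_nonneg (mul_nonneg h1 hm0.1) (mul_nonneg h2 hm1.1)
      have hU1 : t * p * m0 + (1 - t) * q * m1 ≤ t * p + (1 - t) * q := by
        nlinarith [hm0.2, hm1.2, h1, h2]
      exact ⟨hS, ⟨div_nonneg hU0 hS, (div_le_one hpos).2 hU1⟩,
        mul_div_cancel₀ _ (ne_of_gt hpos)⟩
  refine ⟨convex_Icc _ _, fun x hx y hy a b ha hb hab => ?_⟩
  have hz : a • x + b • y ∈ Icc (0:ℝ) 1 := (convex_Icc (0:ℝ) 1) hx hy ha hb hab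
  simp only [smul_eq_mul] at hz ⊢
  obtain ⟨hSx, hcx, hmx⟩ := props x hx
  obtain ⟨hSy, hcy, hmy⟩ := props y hy
  have hSz : (a * x + b * y) * p + (1 - (a * x + b * y)) * q
      = a * (x * p + (1 - x) * q) + b * (y * p + (1 - y) * q) := by
    linear_combination (-q) * hab
  have hUz : (a * x + b * y) * p * m0 + (1 - (a * x + b * y)) * q * m1
      = a * ((x * p + (1 - x) * q) * ((x * p * m0 + (1 - x) * q * m1)
            / (x * p + (1 - x) * q)))
        + b * ((y * p + (1 - y) * q) * ((y * p * m0 + (1 - y) * q * m1)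
            / (y * p + (1 - y) * q))) := by
    rw [hmx, hmy]
    linear_combination (-(q * m1)) * hab
  rw [hSz, hUz]
  exact persp hg hSx hSy hcx hcy ha hb hab

noncomputable def mixf (P : BanditParams) (a y : Bool) (V Vt : ℝ → ℝ) (x : ℝ) : ℝ :=
  P.θ a y 0 * V x + (1 - P.θ a y 0) * Vt x

noncomputable def TS (P : BanditParams) (V Vt : ℝ → ℝ) (π : ℝ) : ℝ :=
  P.ρ π + P.β * (P.ρ π * mixf P true true V Vt (P.γ11 π)
    + (1 - P.ρ π) * mixf P true true V Vt (P.γ01 π))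

noncomputable def TNS (P : BanditParams) (w : ℝ) (V Vt : ℝ → ℝ) (π : ℝ) : ℝ :=
  w + P.β * mixf P false true V Vt (P.Γ1 π)

noncomputable def TtS (P : BanditParams) (V Vt : ℝ → ℝ) (π : ℝ) : ℝ :=
  P.ξ π + P.β * (P.ρ π * mixf P true false V Vt (P.γ10 π)
    + (1 - P.ρ π) * mixf P true false V Vt (P.γ00 π))

noncomputable def TtNS (P : BanditParams) (w : ℝ) (V Vt : ℝ → ℝ) (π : ℝ) : ℝ :=
  w + P.β * mixf P false false V Vt (P.Γ0 π)

noncomputable def vseq (P : BanditParams) (w : ℝ) : ℕ → ((ℝ → ℝ) × (ℝ → ℝ))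
  | 0 => (fun _ => 0, fun _ => 0)
  | n + 1 =>
      (fun π => max (TS P (vseq P w n).1 (vseq P w n).2 π)
        (TNS P w (vseq P w n).1 (vseq P w n).2 π),
       fun π => max (TtS P (vseq P w n).1 (vseq P w n).2 π)
        (TtNS P w (vseq P w n).1 (vseq P w n).2 π))

variable {P : BanditParams}

lemma hr0pos (hP : P.Valid) : 0 < P.r0 := lt_of_le_of_lt hP.hη0 hP.hη0r0
lemma hr1pos (hP : P.Valid) : 0 < P.r1 := by
  have := hr0pos hP; linarith [hP.hr0η1, hP.hη1r1]
lemma hr0le1 (hP : P.Valid) : P.r0 ≤ 1 := by linarith [hP.hr0η1, hP.hη1r1, hP.hr1]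

lemma ρ_pos (hP : P.Valid) {π : ℝ} (hπ : π ∈ Icc (0:ℝ) 1) : 0 < P.ρ π := by
  obtain ⟨h0, h1⟩ := hπ
  have h := mul_nonneg (by linarith : (0:ℝ) ≤ 1 - π)
    (by linarith [hP.hr0η1, hP.hη1r1] : (0:ℝ) ≤ P.r1 - P.r0)
  have := hr0pos hP
  simp only [BanditParams.ρ]
  nlinarith

lemma ρ_mem (hP : P.Valid) {π : ℝ} (hπ : π ∈ Icc (0:ℝ) 1) : P.ρ π ∈ Icc (0:ℝ) 1 := by
  obtain ⟨h0, h1⟩ := hπ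
  refine ⟨(ρ_pos hP ⟨h0, h1⟩).le, ?_⟩
  have h2 := mul_nonneg h0 (by linarith [hr0le1 hP] : (0:ℝ) ≤ 1 - P.r0)
  have h3 := mul_nonneg (by linarith : (0:ℝ) ≤ 1 - π) (by linarith [hP.hr1] : (0:ℝ) ≤ 1 - P.r1)
  simp only [BanditParams.ρ]
  nlinarith

lemma γ11_mem (hP : P.Valid) {π : ℝ} (hπ : π ∈ Icc (0:ℝ) 1) :
    P.γ11 π ∈ Icc (0:ℝ) 1 := by
  obtain ⟨h0, h1⟩ := hπ
  have hs : 0 < π * P.r0 + (1 - π) * P.r1 := by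
    have := ρ_pos hP (⟨h0, h1⟩ : π ∈ Icc (0:ℝ) 1)
    simpa [BanditParams.ρ] using this
  have h1' : 0 ≤ π * P.r0 := mul_nonneg h0 (hr0pos hP).le
  have h2' : 0 ≤ (1 - π) * P.r1 := mul_nonneg (by linarith) (hr1pos hP).le
  have hu0 : 0 ≤ π * P.r0 * P.μ0 + (1 - π) * P.r1 * P.μ1 :=
    add_nonneg (mul_nonneg h1' hP.hμ0.1) (mul_nonneg h2' hP.hμ1.1)
  have hu1 : π * P.r0 * P.μ0 + (1 - π) * P.r1 * P.μ1 ≤ π * P.r0 + (1 - π) * P.r1 := by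
    nlinarith [hP.hμ0.2, hP.hμ1.2, h1', h2']
  exact ⟨div_nonneg hu0 hs.le, by
    simp only [BanditParams.γ11]
    exact (div_le_one hs).2 hu1⟩

lemma γ01_mem (hP : P.Valid) {π : ℝ} (hπ : π ∈ Icc (0:ℝ) 1) :
    P.γ01 π ∈ Icc (0:ℝ) 1 := by
  obtain ⟨h0, h1⟩ := hπ
  have h1' : 0 ≤ π * (1 - P.r0) := mul_nonneg h0 (by linarith [hr0le1 hP])
  have h2' : 0 ≤ (1 - π) * (1 - P.r1) := mul_nonneg (by linarith) (by linarith [hP.hr1])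
  have hs : 0 ≤ π * (1 - P.r0) + (1 - π) * (1 - P.r1) := by linarith
  simp only [BanditParams.γ01]
  rcases eq_or_lt_of_le hs with hz | hpos
  · rw [← hz, div_zero]; exact ⟨le_rfl, zero_le_one⟩
  · have hu0 : 0 ≤ π * (1 - P.r0) * P.μ0 + (1 - π) * (1 - P.r1) * P.μ1 :=
      add_nonneg (mul_nonneg h1' hP.hμ0.1) (mul_nonneg h2' hP.hμ1.1)
    have hu1 : π * (1 - P.r0) * P.μ0 + (1 - π) * (1 - P.r1) * P.μ1
        ≤ π * (1 - P.r0) + (1 - π) * (1 - P.r1) := by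
      nlinarith [hP.hμ0.2, hP.hμ1.2, h1', h2']
    exact ⟨div_nonneg hu0 hpos.le, (div_le_one hpos).2 hu1⟩

lemma affμ_mem (hP : P.Valid) {π : ℝ} (hπ : π ∈ Icc (0:ℝ) 1) :
    π * P.μ0 + (1 - π) * P.μ1 ∈ Icc (0:ℝ) 1 := by
  obtain ⟨h0, h1⟩ := hπ
  constructor
  · have := mul_nonneg h0 hP.hμ0.1
    have := mul_nonneg (by linarith : (0:ℝ) ≤ 1 - π) hP.hμ1.1
    linarith
  · nlinarith [hP.hμ0.2, hP.hμ1.2, hP.hμ0.1, hP.hμ1.1]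

lemma Γ1_mem (hP : P.Valid) {π : ℝ} (hπ : π ∈ Icc (0:ℝ) 1) :
    P.Γ1 π ∈ Icc (0:ℝ) 1 := by
  by_cases hr : P.rested
  · simpa [BanditParams.Γ1, hr] using hπ
  · simpa [BanditParams.Γ1, hr] using affμ_mem hP hπ

lemma γ10_mem (hP : P.Valid) {π : ℝ} (hπ : π ∈ Icc (0:ℝ) 1) :
    P.γ10 π ∈ Icc (0:ℝ) 1 := by
  by_cases hr : P.rested
  · simpa [BanditParams.γ10, hr] using hπ
  · simpa [BanditParams.γ10, hr] using γ11_mem hP hπ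

lemma γ00_mem (hP : P.Valid) {π : ℝ} (hπ : π ∈ Icc (0:ℝ) 1) :
    P.γ00 π ∈ Icc (0:ℝ) 1 := by
  by_cases hr : P.rested
  · simpa [BanditParams.γ00, hr] using hπ
  · simpa [BanditParams.γ00, hr] using γ01_mem hP hπ

lemma mixf_convex (hP : P.Valid) (a y : Bool) {V Vt : ℝ → ℝ}
    (hV : ConvexOn ℝ (Icc (0:ℝ) 1) V) (hVt : ConvexOn ℝ (Icc (0:ℝ) 1) Vt) :
    ConvexOn ℝ (Icc (0:ℝ) 1) (mixf P a y V Vt) := by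
  have hθ := hP.hθ a y 0 ⟨le_rfl, zero_le_one⟩
  refine ⟨convex_Icc _ _, fun u hu v hv c d hc hd hcd => ?_⟩
  have h1 := hV.2 hu hv hc hd hcd
  have h2 := hVt.2 hu hv hc hd hcd
  simp only [smul_eq_mul] at h1 h2 ⊢
  simp only [mixf]
  have e1 := mul_le_mul_of_nonneg_left h1 hθ.1
  have e2 := mul_le_mul_of_nonneg_left h2 (by linarith [hθ.2] : (0:ℝ) ≤ 1 - P.θ a y 0)
  calc P.θ a y 0 * V (c * u + d * v) + (1 - P.θ a y 0) * Vt (c * u + d * v)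
      ≤ P.θ a y 0 * (c * V u + d * V v)
        + (1 - P.θ a y 0) * (c * Vt u + d * Vt v) := add_le_add e1 e2
    _ = c * (P.θ a y 0 * V u + (1 - P.θ a y 0) * Vt u)
        + d * (P.θ a y 0 * V v + (1 - P.θ a y 0) * Vt v) := by ring

lemma comp_affμ (hP : P.Valid) {g : ℝ → ℝ} (hg : ConvexOn ℝ (Icc (0:ℝ) 1) g) :
    ConvexOn ℝ (Icc (0:ℝ) 1) (fun π => g (π * P.μ0 + (1 - π) * P.μ1)) := by
  refine ⟨convex_Icc _ _, fun u hu v hv c d hc hd hcd => ?_⟩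
  simp only [smul_eq_mul]
  have harg : (c * u + d * v) * P.μ0 + (1 - (c * u + d * v)) * P.μ1
      = c * (u * P.μ0 + (1 - u) * P.μ1) + d * (v * P.μ0 + (1 - v) * P.μ1) := by
    linear_combination (-P.μ1) * hcd
  rw [harg]
  have := hg.2 (affμ_mem hP hu) (affμ_mem hP hv) hc hd hcd
  simpa using this

lemma const_add_smul {g : ℝ → ℝ} {c w : ℝ} (hc : 0 ≤ c)
    (hg : ConvexOn ℝ (Icc (0:ℝ) 1) g) :
    ConvexOn ℝ (Icc (0:ℝ) 1) (fun π => w + c * g π) := by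
  have h := (convexOn_const w (convex_Icc (0:ℝ) 1)).add (ConvexOn.smul hc hg)
  apply convexOn_congr_on ?_ h
  intro π _
  simp [Pi.add_apply, Pi.smul_apply, smul_eq_mul]

lemma TS_convex (hP : P.Valid) {V Vt : ℝ → ℝ}
    (hV : ConvexOn ℝ (Icc (0:ℝ) 1) V) (hVt : ConvexOn ℝ (Icc (0:ℝ) 1) Vt) :
    ConvexOn ℝ (Icc (0:ℝ) 1) (TS P V Vt) := by
  have hg := mixf_convex hP true true hV hVt
  have h1 := weight_comp hg (hr0pos hP).le (hr1pos hP).le hP.hμ0 hP.hμ1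
  have h2 := weight_comp hg (p := 1 - P.r0) (q := 1 - P.r1)
    (by linarith [hr0le1 hP] : (0:ℝ) ≤ 1 - P.r0)
    (by linarith [hP.hr1] : (0:ℝ) ≤ 1 - P.r1) hP.hμ0 hP.hμ1
  have hρ := convexOn_affine P.r1 (P.r0 - P.r1)
  have tot := hρ.add (ConvexOn.smul hP.hβ0.le (h1.add h2))
  apply convexOn_congr_on ?_ tot
  intro π _
  simp only [TS, mixf, BanditParams.ρ, BanditParams.γ11, BanditParams.γ01,
    Pi.add_apply, Pi.smul_apply, smul_eq_mul]
  ring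

lemma TNS_convex (hP : P.Valid) (w : ℝ) {V Vt : ℝ → ℝ}
    (hV : ConvexOn ℝ (Icc (0:ℝ) 1) V) (hVt : ConvexOn ℝ (Icc (0:ℝ) 1) Vt) :
    ConvexOn ℝ (Icc (0:ℝ) 1) (TNS P w V Vt) := by
  have hg := mixf_convex hP false true hV hVt
  by_cases hr : P.rested
  · apply convexOn_congr_on ?_ (const_add_smul (w := w) hP.hβ0.le hg)
    intro π _
    simp [TNS, BanditParams.Γ1, hr]
  · apply convexOn_congr_on ?_ (const_add_smul (w := w) hP.hβ0.le (comp_affμ hP hg))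
    intro π _
    simp [TNS, BanditParams.Γ1, hr]

lemma TtS_convex (hP : P.Valid) {V Vt : ℝ → ℝ}
    (hV : ConvexOn ℝ (Icc (0:ℝ) 1) V) (hVt : ConvexOn ℝ (Icc (0:ℝ) 1) Vt) :
    ConvexOn ℝ (Icc (0:ℝ) 1) (TtS P V Vt) := by
  have hg := mixf_convex hP true false hV hVt
  have hξ := convexOn_affine P.η1 (P.η0 - P.η1)
  by_cases hr : P.rested
  · have tot := hξ.add (ConvexOn.smul hP.hβ0.le hg)
    apply convexOn_congr_on ?_ tot
    intro π _
    simp only [TtS, mixf, BanditParams.γ10, BanditParams.γ00, hr, if_true,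
      BanditParams.ξ, BanditParams.ρ, Pi.add_apply, Pi.smul_apply, smul_eq_mul]
    ring
  · have h1 := weight_comp hg (hr0pos hP).le (hr1pos hP).le hP.hμ0 hP.hμ1
    have h2 := weight_comp hg (p := 1 - P.r0) (q := 1 - P.r1)
      (by linarith [hr0le1 hP] : (0:ℝ) ≤ 1 - P.r0)
      (by linarith [hP.hr1] : (0:ℝ) ≤ 1 - P.r1) hP.hμ0 hP.hμ1
    have tot := hξ.add (ConvexOn.smul hP.hβ0.le (h1.add h2))
    apply convexOn_congr_on ?_ tot
    intro π _
    simp only [TtS, mixf, BanditParams.γ10, BanditParams.γ00, hr, if_false,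
      BanditParams.ξ, BanditParams.ρ, BanditParams.γ11, BanditParams.γ01,
      Pi.add_apply, Pi.smul_apply, smul_eq_mul, Bool.false_eq_true]
    ring

lemma TtNS_convex (hP : P.Valid) (w : ℝ) {V Vt : ℝ → ℝ}
    (hV : ConvexOn ℝ (Icc (0:ℝ) 1) V) (hVt : ConvexOn ℝ (Icc (0:ℝ) 1) Vt) :
    ConvexOn ℝ (Icc (0:ℝ) 1) (TtNS P w V Vt) := by
  have hg := mixf_convex hP false false hV hVt
  apply convexOn_congr_on ?_ (const_add_smul (w := w) hP.hβ0.le hg)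
  intro π _
  simp [TtNS, BanditParams.Γ0]

lemma mixf_diff (hP : P.Valid) (a y : Bool) {V Vt V' Vt' : ℝ → ℝ} {D x : ℝ}
    (h1 : |V x - V' x| ≤ D) (h2 : |Vt x - Vt' x| ≤ D) :
    |mixf P a y V Vt x - mixf P a y V' Vt' x| ≤ D := by
  have hθ := hP.hθ a y 0 ⟨le_rfl, zero_le_one⟩
  have e : mixf P a y V Vt x - mixf P a y V' Vt' x
      = P.θ a y 0 * (V x - V' x) + (1 - P.θ a y 0) * (Vt x - Vt' x) := by
    simp only [mixf]; ring
  rw [e]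
  calc |P.θ a y 0 * (V x - V' x) + (1 - P.θ a y 0) * (Vt x - Vt' x)|
      ≤ |P.θ a y 0 * (V x - V' x)| + |(1 - P.θ a y 0) * (Vt x - Vt' x)| := abs_add_le _ _
    _ = P.θ a y 0 * |V x - V' x| + (1 - P.θ a y 0) * |Vt x - Vt' x| := by
        rw [abs_mul, abs_mul, abs_of_nonneg hθ.1,
          abs_of_nonneg (by linarith [hθ.2] : (0:ℝ) ≤ 1 - P.θ a y 0)]
    _ ≤ P.θ a y 0 * D + (1 - P.θ a y 0) * D :=
        add_le_add (mul_le_mul_of_nonneg_left h1 hθ.1)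
          (mul_le_mul_of_nonneg_left h2 (by linarith [hθ.2]))
    _ = D := by ring

lemma weighted_diff (hP : P.Valid) {π Δ1 Δ2 D : ℝ} (hπ : π ∈ Icc (0:ℝ) 1)
    (h1 : |Δ1| ≤ D) (h2 : |Δ2| ≤ D) :
    |P.β * (P.ρ π * Δ1 + (1 - P.ρ π) * Δ2)| ≤ P.β * D := by
  have hρ := ρ_mem hP hπ
  rw [abs_mul, abs_of_nonneg hP.hβ0.le]
  apply mul_le_mul_of_nonneg_left ?_ hP.hβ0.le
  calc |P.ρ π * Δ1 + (1 - P.ρ π) * Δ2|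
      ≤ |P.ρ π * Δ1| + |(1 - P.ρ π) * Δ2| := abs_add_le _ _
    _ = P.ρ π * |Δ1| + (1 - P.ρ π) * |Δ2| := by
        rw [abs_mul, abs_mul, abs_of_nonneg hρ.1,
          abs_of_nonneg (by linarith [hρ.2] : (0:ℝ) ≤ 1 - P.ρ π)]
    _ ≤ P.ρ π * D + (1 - P.ρ π) * D :=
        add_le_add (mul_le_mul_of_nonneg_left h1 hρ.1)
          (mul_le_mul_of_nonneg_left h2 (by linarith [hρ.2]))
    _ = D := by ring

lemma contract (hP : P.Valid) (w : ℝ) {V Vt V' Vt' : ℝ → ℝ} {D : ℝ}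
    (hD : ∀ x ∈ Icc (0:ℝ) 1, |V x - V' x| ≤ D ∧ |Vt x - Vt' x| ≤ D) :
    ∀ π ∈ Icc (0:ℝ) 1,
      |max (TS P V Vt π) (TNS P w V Vt π)
        - max (TS P V' Vt' π) (TNS P w V' Vt' π)| ≤ P.β * D ∧
      |max (TtS P V Vt π) (TtNS P w V Vt π)
        - max (TtS P V' Vt' π) (TtNS P w V' Vt' π)| ≤ P.β * D := by
  intro π hπ
  have hd : ∀ x ∈ Icc (0:ℝ) 1, ∀ a y : Bool,
      |mixf P a y V Vt x - mixf P a y V' Vt' x| ≤ D := by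
    intro x hx a y
    exact mixf_diff hP a y (hD x hx).1 (hD x hx).2
  have hTS : |TS P V Vt π - TS P V' Vt' π| ≤ P.β * D := by
    have e : TS P V Vt π - TS P V' Vt' π
        = P.β * (P.ρ π * (mixf P true true V Vt (P.γ11 π)
            - mixf P true true V' Vt' (P.γ11 π))
          + (1 - P.ρ π) * (mixf P true true V Vt (P.γ01 π)
            - mixf P true true V' Vt' (P.γ01 π))) := by
      simp only [TS]; ring
    rw [e]
    exact weighted_diff hP hπ (hd _ (γ11_mem hP hπ) true true) (hd _ (γ01_mem hP hπ) true true)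
  have hTNS : |TNS P w V Vt π - TNS P w V' Vt' π| ≤ P.β * D := by
    have e : TNS P w V Vt π - TNS P w V' Vt' π
        = P.β * (mixf P false true V Vt (P.Γ1 π) - mixf P false true V' Vt' (P.Γ1 π)) := by
      simp only [TNS]; ring
    rw [e, abs_mul, abs_of_nonneg hP.hβ0.le]
    exact mul_le_mul_of_nonneg_left (hd _ (Γ1_mem hP hπ) false true) hP.hβ0.le
  have hTtS : |TtS P V Vt π - TtS P V' Vt' π| ≤ P.β * D := by
    have e : TtS P V Vt π - TtS P V' Vt' π
        = P.β * (P.ρ π * (mixf P true false V Vt (P.γ10 π)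
            - mixf P true false V' Vt' (P.γ10 π))
          + (1 - P.ρ π) * (mixf P true false V Vt (P.γ00 π)
            - mixf P true false V' Vt' (P.γ00 π))) := by
      simp only [TtS]; ring
    rw [e]
    exact weighted_diff hP hπ (hd _ (γ10_mem hP hπ) true false) (hd _ (γ00_mem hP hπ) true false)
  have hTtNS : |TtNS P w V Vt π - TtNS P w V' Vt' π| ≤ P.β * D := by
    have e : TtNS P w V Vt π - TtNS P w V' Vt' π
        = P.β * (mixf P false false V Vt (P.Γ0 π)
          - mixf P false false V' Vt' (P.Γ0 π)) := by
      simp only [TtNS]; ring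
    rw [e, abs_mul, abs_of_nonneg hP.hβ0.le]
    refine mul_le_mul_of_nonneg_left (hd _ ?_ false false) hP.hβ0.le
    simpa [BanditParams.Γ0] using hπ
  constructor
  · exact le_trans (abs_max_sub_max_le_max _ _ _ _) (max_le hTS hTNS)
  · exact le_trans (abs_max_sub_max_le_max _ _ _ _) (max_le hTtS hTtNS)

end ConvAux

open ConvAux

/-- If the availability functions do not depend on the belief, then for
every fixed subsidy `w` all six value functions are convex in the belief `π` on `[0,1]`. -/
theorem convexity_in_belief (P : BanditParams) (hP : P.Valid)
    (hθconst : ∀ a y π π', P.θ a y π = P.θ a y π')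
    (w : ℝ) (VS VNS VtS VtNS V Vt : ℝ → ℝ)
    (hsol : P.IsSolution w VS VNS VtS VtNS V Vt) :
    ConvexOn ℝ (Icc (0 : ℝ) 1) VS ∧ ConvexOn ℝ (Icc (0 : ℝ) 1) VNS ∧
      ConvexOn ℝ (Icc (0 : ℝ) 1) VtS ∧ ConvexOn ℝ (Icc (0 : ℝ) 1) VtNS ∧
      ConvexOn ℝ (Icc (0 : ℝ) 1) V ∧ ConvexOn ℝ (Icc (0 : ℝ) 1) Vt := by
  -- translate the fixed-point equations into operator form
  have hVSe : ∀ π ∈ Icc (0:ℝ) 1, TS P V Vt π = VS π := by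
    intro π hπ
    rw [hsol.eqVS π hπ]
    simp only [TS, mixf]
    rw [hθconst true true π 0]
  have hVNSe : ∀ π ∈ Icc (0:ℝ) 1, TNS P w V Vt π = VNS π := by
    intro π hπ
    rw [hsol.eqVNS π hπ]
    simp only [TNS, mixf]
    rw [hθconst false true π 0]
  have hVtSe : ∀ π ∈ Icc (0:ℝ) 1, TtS P V Vt π = VtS π := by
    intro π hπ
    rw [hsol.eqVtS π hπ]
    simp only [TtS, mixf]
    rw [hθconst true false π 0]
  have hVtNSe : ∀ π ∈ Icc (0:ℝ) 1, TtNS P w V Vt π = VtNS π := by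
    intro π hπ
    rw [hsol.eqVtNS π hπ]
    simp only [TtNS, mixf]
    rw [hθconst false false π 0]
  have hfixV : ∀ π ∈ Icc (0:ℝ) 1, V π = max (TS P V Vt π) (TNS P w V Vt π) := by
    intro π hπ
    rw [hsol.eqV π hπ, hVSe π hπ, hVNSe π hπ]
  have hfixVt : ∀ π ∈ Icc (0:ℝ) 1, Vt π = max (TtS P V Vt π) (TtNS P w V Vt π) := by
    intro π hπ
    rw [hsol.eqVt π hπ, hVtSe π hπ, hVtNSe π hπ]
  obtain ⟨M, hM⟩ := hsol.bounded
  have hM0 : 0 ≤ M := le_trans (abs_nonneg _) (hM 0 ⟨le_rfl, zero_le_one⟩).1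
  -- approximation by value iteration
  have key : ∀ n, ∀ π ∈ Icc (0:ℝ) 1,
      |V π - (vseq P w n).1 π| ≤ P.β ^ n * M ∧ |Vt π - (vseq P w n).2 π| ≤ P.β ^ n * M := by
    intro n
    induction n with
    | zero =>
      intro π hπ
      simp only [vseq, pow_zero, one_mul, sub_zero]
      exact hM π hπ
    | succ n ih =>
      intro π hπ
      have hc := contract hP w (fun x hx => ih x hx) π hπ
      have hpow : P.β * (P.β ^ n * M) = P.β ^ (n + 1) * M := by rw [pow_succ]; ring
      constructor
      · have h1 := hc.1
        rw [hfixV π hπ]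
        calc |max (TS P V Vt π) (TNS P w V Vt π) - (vseq P w (n + 1)).1 π|
            = |max (TS P V Vt π) (TNS P w V Vt π)
              - max (TS P (vseq P w n).1 (vseq P w n).2 π)
                (TNS P w (vseq P w n).1 (vseq P w n).2 π)| := rfl
          _ ≤ P.β * (P.β ^ n * M) := h1
          _ = P.β ^ (n + 1) * M := hpow
      · have h2 := hc.2
        rw [hfixVt π hπ]
        calc |max (TtS P V Vt π) (TtNS P w V Vt π) - (vseq P w (n + 1)).2 π|
            = |max (TtS P V Vt π) (TtNS P w V Vt π)
              - max (TtS P (vseq P w n).1 (vseq P w n).2 π)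
                (TtNS P w (vseq P w n).1 (vseq P w n).2 π)| := rfl
          _ ≤ P.β * (P.β ^ n * M) := h2
          _ = P.β ^ (n + 1) * M := hpow
  -- the iterates are convex
  have hseqconv : ∀ n, ConvexOn ℝ (Icc (0:ℝ) 1) (vseq P w n).1 ∧
      ConvexOn ℝ (Icc (0:ℝ) 1) (vseq P w n).2 := by
    intro n
    induction n with
    | zero =>
      exact ⟨convexOn_const 0 (convex_Icc _ _), convexOn_const 0 (convex_Icc _ _)⟩
    | succ n ih =>
      exact ⟨(TS_convex hP ih.1 ih.2).sup (TNS_convex hP w ih.1 ih.2),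
        (TtS_convex hP ih.1 ih.2).sup (TtNS_convex hP w ih.1 ih.2)⟩
  have hβpow : Filter.Tendsto (fun n : ℕ => P.β ^ n) Filter.atTop (nhds 0) :=
    tendsto_pow_atTop_nhds_zero_of_lt_one hP.hβ0.le hP.hβ1
  -- pass convexity to the limit
  have limit_convex : ∀ (W : ℝ → ℝ) (Wn : ℕ → ℝ → ℝ),
      (∀ n, ConvexOn ℝ (Icc (0:ℝ) 1) (Wn n)) →
      (∀ n, ∀ π ∈ Icc (0:ℝ) 1, |W π - Wn n π| ≤ P.β ^ n * M) →
      ConvexOn ℝ (Icc (0:ℝ) 1) W := by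
    intro W Wn hconv happrox
    refine ⟨convex_Icc _ _, fun x hx y hy c d hc hd hcd => ?_⟩
    have hz : c • x + d • y ∈ Icc (0:ℝ) 1 := (convex_Icc (0:ℝ) 1) hx hy hc hd hcd
    simp only [smul_eq_mul] at hz ⊢
    have hstep : ∀ n, W (c * x + d * y) ≤ c * W x + d * W y + 2 * (P.β ^ n * M) := by
      intro n
      have a1 := (abs_le.1 (happrox n _ hz)).2
      have a2 := (abs_le.1 (happrox n x hx)).1
      have a3 := (abs_le.1 (happrox n y hy)).1
      have hcv := (hconv n).2 hx hy hc hd hcd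
      simp only [smul_eq_mul] at hcv
      have e1 : Wn n x ≤ W x + P.β ^ n * M := by linarith
      have e2 : Wn n y ≤ W y + P.β ^ n * M := by linarith
      have e3 : c * Wn n x ≤ c * W x + c * (P.β ^ n * M) := by nlinarith
      have e4 : d * Wn n y ≤ d * W y + d * (P.β ^ n * M) := by nlinarith
      have e5 : c * (P.β ^ n * M) + d * (P.β ^ n * M) = P.β ^ n * M := by
        linear_combination (P.β ^ n * M) * hcd
      linarith
    have htend : Filter.Tendsto (fun n : ℕ => c * W x + d * W y + 2 * (P.β ^ n * M))
        Filter.atTop (nhds (c * W x + d * W y + 2 * (0 * M))) :=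
      Filter.Tendsto.const_add _ (Filter.Tendsto.const_mul _ (hβpow.mul_const M))
    have := ge_of_tendsto htend (Filter.Eventually.of_forall hstep)
    simpa using this
  have hVconv : ConvexOn ℝ (Icc (0:ℝ) 1) V :=
    limit_convex V (fun n => (vseq P w n).1) (fun n => (hseqconv n).1)
      (fun n π hπ => (key n π hπ).1)
  have hVtconv : ConvexOn ℝ (Icc (0:ℝ) 1) Vt :=
    limit_convex Vt (fun n => (vseq P w n).2) (fun n => (hseqconv n).2)
      (fun n π hπ => (key n π hπ).2)
  exact ⟨convexOn_congr_on hVSe (TS_convex hP hVconv hVtconv),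
    convexOn_congr_on hVNSe (TNS_convex hP w hVconv hVtconv),
    convexOn_congr_on hVtSe (TtS_convex hP hVconv hVtconv),
    convexOn_congr_on hVtNSe (TtNS_convex hP w hVconv hVtconv),
    hVconv, hVtconv⟩
end

section
/- For the single-armed hidden-Markov bandit with subsidy (either the rested or the restless model), for every fixed belief π ∈ [0,1], each of the functions w ↦ V_S(π; w), w ↦ V_NS(π; w), w ↦ Ṽ_S(π; w), w ↦ Ṽ_NS(π; w), w ↦ V(π; w) and w ↦ Ṽ(π; w) is nondecreasing and convex in the subsidy w ∈ ℝ. -/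
open Set BanditParams

section Aux

private lemma div_Icc {x y : ℝ} (h0 : 0 ≤ x) (hxy : x ≤ y) : x / y ∈ Icc (0:ℝ) 1 := by
  rcases lt_or_eq_of_le (h0.trans hxy) with h | h
  · exact ⟨div_nonneg h0 h.le, (div_le_one h).mpr hxy⟩
  · have hx : x = 0 := le_antisymm (hxy.trans h.ge) h0
    simp [hx]

private lemma rho_mem (P : BanditParams) (hP : P.Valid) {π : ℝ}
    (hπ : π ∈ Icc (0:ℝ) 1) : P.ρ π ∈ Icc (0:ℝ) 1 := by
  obtain ⟨hπ0, hπ1⟩ := hπ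
  have h1 : 0 < P.r0 := lt_of_le_of_lt hP.hη0 hP.hη0r0
  have h2 : 0 < P.r1 := h1.trans (hP.hr0η1.trans hP.hη1r1)
  have h3 : P.r0 ≤ 1 := le_trans (hP.hr0η1.trans hP.hη1r1).le hP.hr1
  have h4 : P.r1 ≤ 1 := hP.hr1
  constructor
  · unfold BanditParams.ρ; nlinarith
  · unfold BanditParams.ρ; nlinarith

private lemma g11_mem (P : BanditParams) (hP : P.Valid) {π : ℝ}
    (hπ : π ∈ Icc (0:ℝ) 1) : P.γ11 π ∈ Icc (0:ℝ) 1 := by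
  obtain ⟨hπ0, hπ1⟩ := hπ
  have h1 : 0 < P.r0 := lt_of_le_of_lt hP.hη0 hP.hη0r0
  have h2 : 0 < P.r1 := h1.trans (hP.hr0η1.trans hP.hη1r1)
  obtain ⟨hμ00, hμ01⟩ := hP.hμ0
  obtain ⟨hμ10, hμ11⟩ := hP.hμ1
  have hπ1' : (0:ℝ) ≤ 1 - π := by linarith
  apply div_Icc
  · nlinarith [mul_nonneg (mul_nonneg hπ0 h1.le) hμ00,
      mul_nonneg (mul_nonneg hπ1' h2.le) hμ10]
  · nlinarith [mul_nonneg (mul_nonneg hπ0 h1.le) (by linarith : (0:ℝ) ≤ 1 - P.μ0),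
      mul_nonneg (mul_nonneg hπ1' h2.le) (by linarith : (0:ℝ) ≤ 1 - P.μ1)]

private lemma g01_mem (P : BanditParams) (hP : P.Valid) {π : ℝ}
    (hπ : π ∈ Icc (0:ℝ) 1) : P.γ01 π ∈ Icc (0:ℝ) 1 := by
  obtain ⟨hπ0, hπ1⟩ := hπ
  have h1 : 0 < P.r0 := lt_of_le_of_lt hP.hη0 hP.hη0r0
  have h3 : P.r0 ≤ 1 := le_trans (hP.hr0η1.trans hP.hη1r1).le hP.hr1
  have h4 : P.r1 ≤ 1 := hP.hr1
  obtain ⟨hμ00, hμ01⟩ := hP.hμ0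
  obtain ⟨hμ10, hμ11⟩ := hP.hμ1
  have hπ1' : (0:ℝ) ≤ 1 - π := by linarith
  apply div_Icc
  · nlinarith [mul_nonneg (mul_nonneg hπ0 (by linarith : (0:ℝ) ≤ 1 - P.r0)) hμ00,
      mul_nonneg (mul_nonneg hπ1' (by linarith : (0:ℝ) ≤ 1 - P.r1)) hμ10]
  · nlinarith [mul_nonneg (mul_nonneg hπ0 (by linarith : (0:ℝ) ≤ 1 - P.r0))
        (by linarith : (0:ℝ) ≤ 1 - P.μ0),
      mul_nonneg (mul_nonneg hπ1' (by linarith : (0:ℝ) ≤ 1 - P.r1))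
        (by linarith : (0:ℝ) ≤ 1 - P.μ1)]

private lemma g10_mem (P : BanditParams) (hP : P.Valid) {π : ℝ}
    (hπ : π ∈ Icc (0:ℝ) 1) : P.γ10 π ∈ Icc (0:ℝ) 1 := by
  unfold BanditParams.γ10
  split
  · exact hπ
  · exact g11_mem P hP hπ

private lemma g00_mem (P : BanditParams) (hP : P.Valid) {π : ℝ}
    (hπ : π ∈ Icc (0:ℝ) 1) : P.γ00 π ∈ Icc (0:ℝ) 1 := by
  unfold BanditParams.γ00
  split
  · exact hπ
  · exact g01_mem P hP hπ

private lemma G1_mem (P : BanditParams) (hP : P.Valid) {π : ℝ}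
    (hπ : π ∈ Icc (0:ℝ) 1) : P.Γ1 π ∈ Icc (0:ℝ) 1 := by
  obtain ⟨hπ0, hπ1⟩ := hπ
  obtain ⟨hμ00, hμ01⟩ := hP.hμ0
  obtain ⟨hμ10, hμ11⟩ := hP.hμ1
  unfold BanditParams.Γ1
  split
  · exact ⟨hπ0, hπ1⟩
  · constructor
    · nlinarith [mul_nonneg hπ0 hμ00, mul_nonneg (by linarith : (0:ℝ) ≤ 1 - π) hμ10]
    · nlinarith [mul_nonneg hπ0 (by linarith : (0:ℝ) ≤ 1 - P.μ0),
        mul_nonneg (by linarith : (0:ℝ) ≤ 1 - π) (by linarith : (0:ℝ) ≤ 1 - P.μ1)]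

private lemma G0_mem (P : BanditParams) {π : ℝ}
    (hπ : π ∈ Icc (0:ℝ) 1) : P.Γ0 π ∈ Icc (0:ℝ) 1 := hπ

private lemma comb_diff {t xw x1 x2 yw y1 y2 a b c : ℝ} (ht : t ∈ Icc (0:ℝ) 1)
    (hx : xw - (a * x1 + b * x2) ≤ c) (hy : yw - (a * y1 + b * y2) ≤ c) :
    (t * xw + (1 - t) * yw)
      - (a * (t * x1 + (1 - t) * y1) + b * (t * x2 + (1 - t) * y2)) ≤ c := by
  nlinarith [mul_le_mul_of_nonneg_left hx ht.1,
    mul_le_mul_of_nonneg_left hy (by linarith [ht.2] : (0:ℝ) ≤ 1 - t)]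

/-- Key one-step bound for the four component value functions. -/
private lemma step (P : BanditParams) (hP : P.Valid)
    (VS VNS VtS VtNS V Vt : ℝ → ℝ → ℝ)
    (hsol : ∀ w : ℝ, P.IsSolution w (VS w) (VNS w) (VtS w) (VtNS w) (V w) (Vt w))
    (a b w w1 w2 c : ℝ) (hab : a + b = 1)
    (hdV : ∀ γ ∈ Icc (0:ℝ) 1, V w γ - (a * V w1 γ + b * V w2 γ) ≤ c)
    (hdVt : ∀ γ ∈ Icc (0:ℝ) 1, Vt w γ - (a * Vt w1 γ + b * Vt w2 γ) ≤ c)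
    (π : ℝ) (hπ : π ∈ Icc (0:ℝ) 1) :
    VS w π - (a * VS w1 π + b * VS w2 π) ≤ P.β * c ∧
    VNS w π - (a * VNS w1 π + b * VNS w2 π) ≤ (w - (a * w1 + b * w2)) + P.β * c ∧
    VtS w π - (a * VtS w1 π + b * VtS w2 π) ≤ P.β * c ∧
    VtNS w π - (a * VtNS w1 π + b * VtNS w2 π) ≤ (w - (a * w1 + b * w2)) + P.β * c := by
  have hb' : b = 1 - a := by linarith
  subst hb'
  have hβ := hP.hβ0.le
  refine ⟨?_, ?_, ?_, ?_⟩
  · have hg11 := g11_mem P hP hπ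
    have hg01 := g01_mem P hP hπ
    have hθ := hP.hθ true true π hπ
    have hρ := rho_mem P hP hπ
    have h1 := comb_diff hθ (hdV _ hg11) (hdVt _ hg11)
    have h0 := comb_diff hθ (hdV _ hg01) (hdVt _ hg01)
    have h2 := comb_diff hρ h1 h0
    have h3 := mul_le_mul_of_nonneg_left h2 hβ
    have e0 := (hsol w).eqVS π hπ
    have e1 := congrArg (fun x => a * x) ((hsol w1).eqVS π hπ)
    have e2 := congrArg (fun x => (1 - a) * x) ((hsol w2).eqVS π hπ)
    linarith [h3, e0, e1, e2]
  · have hg := G1_mem P hP hπ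
    have hθ := hP.hθ false true π hπ
    have h1 := comb_diff hθ (hdV _ hg) (hdVt _ hg)
    have h3 := mul_le_mul_of_nonneg_left h1 hβ
    have e0 := (hsol w).eqVNS π hπ
    have e1 := congrArg (fun x => a * x) ((hsol w1).eqVNS π hπ)
    have e2 := congrArg (fun x => (1 - a) * x) ((hsol w2).eqVNS π hπ)
    linarith [h3, e0, e1, e2]
  · have hg10 := g10_mem P hP hπ
    have hg00 := g00_mem P hP hπ
    have hθ := hP.hθ true false π hπ
    have hρ := rho_mem P hP hπ
    have h1 := comb_diff hθ (hdV _ hg10) (hdVt _ hg10)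
    have h0 := comb_diff hθ (hdV _ hg00) (hdVt _ hg00)
    have h2 := comb_diff hρ h1 h0
    have h3 := mul_le_mul_of_nonneg_left h2 hβ
    have e0 := (hsol w).eqVtS π hπ
    have e1 := congrArg (fun x => a * x) ((hsol w1).eqVtS π hπ)
    have e2 := congrArg (fun x => (1 - a) * x) ((hsol w2).eqVtS π hπ)
    linarith [h3, e0, e1, e2]
  · have hg := G0_mem P hπ
    have hθ := hP.hθ false false π hπ
    have h1 := comb_diff hθ (hdV _ hg) (hdVt _ hg)
    have h3 := mul_le_mul_of_nonneg_left h1 hβ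
    have e0 := (hsol w).eqVtNS π hπ
    have e1 := congrArg (fun x => a * x) ((hsol w1).eqVtNS π hπ)
    have e2 := congrArg (fun x => (1 - a) * x) ((hsol w2).eqVtNS π hπ)
    linarith [h3, e0, e1, e2]

/-- Core sub-convexity/monotonicity inequality for `V` and `Vt`. -/
private lemma core (P : BanditParams) (hP : P.Valid)
    (VS VNS VtS VtNS V Vt : ℝ → ℝ → ℝ)
    (hsol : ∀ w : ℝ, P.IsSolution w (VS w) (VNS w) (VtS w) (VtNS w) (V w) (Vt w))
    (a b w w1 w2 : ℝ) (ha : 0 ≤ a) (hb : 0 ≤ b) (hab : a + b = 1)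
    (hw : w ≤ a * w1 + b * w2) :
    ∀ π ∈ Icc (0:ℝ) 1,
      V w π - (a * V w1 π + b * V w2 π) ≤ 0 ∧
      Vt w π - (a * Vt w1 π + b * Vt w2 π) ≤ 0 := by
  obtain ⟨M0, hM0⟩ := (hsol w).bounded
  obtain ⟨M1, hM1⟩ := (hsol w1).bounded
  obtain ⟨M2, hM2⟩ := (hsol w2).bounded
  set f : ℝ → ℝ := fun γ => max (V w γ - (a * V w1 γ + b * V w2 γ))
    (Vt w γ - (a * Vt w1 γ + b * Vt w2 γ)) with hf
  have h01 : (0:ℝ) ∈ Icc (0:ℝ) 1 := ⟨le_refl 0, by norm_num⟩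
  have hne : (f '' Icc 0 1).Nonempty := ⟨f 0, 0, h01, rfl⟩
  have hbdd : BddAbove (f '' Icc 0 1) := by
    refine ⟨M0 + a * M1 + b * M2, ?_⟩
    rintro x ⟨γ, hγ, rfl⟩
    have h0 := hM0 γ hγ
    have h1 := hM1 γ hγ
    have h2 := hM2 γ hγ
    have b0V := abs_le.mp h0.1
    have b1V := abs_le.mp h1.1
    have b2V := abs_le.mp h2.1
    have b0t := abs_le.mp h0.2
    have b1t := abs_le.mp h1.2
    have b2t := abs_le.mp h2.2
    apply max_le
    · nlinarith [mul_le_mul_of_nonneg_left b1V.1 ha, mul_le_mul_of_nonneg_left b2V.1 hb]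
    · nlinarith [mul_le_mul_of_nonneg_left b1t.1 ha, mul_le_mul_of_nonneg_left b2t.1 hb]
  set M := sSup (f '' Icc 0 1) with hM
  have hMmem : ∀ γ ∈ Icc (0:ℝ) 1, f γ ≤ M := fun γ hγ => le_csSup hbdd ⟨γ, hγ, rfl⟩
  have hdV : ∀ γ ∈ Icc (0:ℝ) 1, V w γ - (a * V w1 γ + b * V w2 γ) ≤ M :=
    fun γ hγ => (le_max_left _ _).trans (hMmem γ hγ)
  have hdVt : ∀ γ ∈ Icc (0:ℝ) 1, Vt w γ - (a * Vt w1 γ + b * Vt w2 γ) ≤ M :=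
    fun γ hγ => (le_max_right _ _).trans (hMmem γ hγ)
  have key : ∀ π ∈ Icc (0:ℝ) 1, f π ≤ P.β * M := by
    intro π hπ
    obtain ⟨hS, hNS, htS, htNS⟩ :=
      step P hP VS VNS VtS VtNS V Vt hsol a b w w1 w2 M hab hdV hdVt π hπ
    have eV0 := (hsol w).eqV π hπ
    have eV1 := (hsol w1).eqV π hπ
    have eV2 := (hsol w2).eqV π hπ
    have eVt0 := (hsol w).eqVt π hπ
    have eVt1 := (hsol w1).eqVt π hπ
    have eVt2 := (hsol w2).eqVt π hπ
    apply max_le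
    · rw [eV0]
      have g1 : VS w1 π ≤ V w1 π := by rw [eV1]; exact le_max_left _ _
      have g2 : VS w2 π ≤ V w2 π := by rw [eV2]; exact le_max_left _ _
      have g3 : VNS w1 π ≤ V w1 π := by rw [eV1]; exact le_max_right _ _
      have g4 : VNS w2 π ≤ V w2 π := by rw [eV2]; exact le_max_right _ _
      have m1 := mul_le_mul_of_nonneg_left g1 ha
      have m2 := mul_le_mul_of_nonneg_left g2 hb
      have m3 := mul_le_mul_of_nonneg_left g3 ha
      have m4 := mul_le_mul_of_nonneg_left g4 hb
      have : max (VS w π) (VNS w π) - (a * V w1 π + b * V w2 π) ≤ P.β * M := by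
        apply sub_le_iff_le_add.mpr
        apply max_le <;> linarith
      linarith
    · rw [eVt0]
      have g1 : VtS w1 π ≤ Vt w1 π := by rw [eVt1]; exact le_max_left _ _
      have g2 : VtS w2 π ≤ Vt w2 π := by rw [eVt2]; exact le_max_left _ _
      have g3 : VtNS w1 π ≤ Vt w1 π := by rw [eVt1]; exact le_max_right _ _
      have g4 : VtNS w2 π ≤ Vt w2 π := by rw [eVt2]; exact le_max_right _ _
      have m1 := mul_le_mul_of_nonneg_left g1 ha
      have m2 := mul_le_mul_of_nonneg_left g2 hb
      have m3 := mul_le_mul_of_nonneg_left g3 ha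
      have m4 := mul_le_mul_of_nonneg_left g4 hb
      have : max (VtS w π) (VtNS w π) - (a * Vt w1 π + b * Vt w2 π) ≤ P.β * M := by
        apply sub_le_iff_le_add.mpr
        apply max_le <;> linarith
      linarith
  have hMβ : M ≤ P.β * M := by
    apply csSup_le hne
    rintro x ⟨π, hπ, rfl⟩
    exact key π hπ
  have hMnonpos : M ≤ 0 := by
    by_contra h
    push_neg at h
    nlinarith [mul_lt_mul_of_pos_right hP.hβ1 h]
  intro π hπ
  have hfπ : f π ≤ 0 := by
    have := key π hπ
    nlinarith [hP.hβ0]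
  exact ⟨(le_max_left _ _).trans hfπ, (le_max_right _ _).trans hfπ⟩

end Aux

/-- For every fixed belief `π ∈ [0,1]`, each of the six value functions
is nondecreasing and convex as a function of the subsidy `w ∈ ℝ`. -/
theorem monotone_convex_in_subsidy (P : BanditParams) (hP : P.Valid)
    (VS VNS VtS VtNS V Vt : ℝ → ℝ → ℝ)
    (hsol : ∀ w : ℝ, P.IsSolution w (VS w) (VNS w) (VtS w) (VtNS w) (V w) (Vt w))
    (π : ℝ) (hπ : π ∈ Icc (0 : ℝ) 1) :
    (Monotone (fun w => VS w π) ∧ ConvexOn ℝ univ (fun w => VS w π)) ∧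
      (Monotone (fun w => VNS w π) ∧ ConvexOn ℝ univ (fun w => VNS w π)) ∧
      (Monotone (fun w => VtS w π) ∧ ConvexOn ℝ univ (fun w => VtS w π)) ∧
      (Monotone (fun w => VtNS w π) ∧ ConvexOn ℝ univ (fun w => VtNS w π)) ∧
      (Monotone (fun w => V w π) ∧ ConvexOn ℝ univ (fun w => V w π)) ∧
      (Monotone (fun w => Vt w π) ∧ ConvexOn ℝ univ (fun w => Vt w π)) := by
  have comp : ∀ a b w w1 w2 : ℝ, 0 ≤ a → 0 ≤ b → a + b = 1 → w ≤ a * w1 + b * w2 →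
      VS w π ≤ a * VS w1 π + b * VS w2 π ∧
      VNS w π ≤ a * VNS w1 π + b * VNS w2 π ∧
      VtS w π ≤ a * VtS w1 π + b * VtS w2 π ∧
      VtNS w π ≤ a * VtNS w1 π + b * VtNS w2 π ∧
      V w π ≤ a * V w1 π + b * V w2 π ∧
      Vt w π ≤ a * Vt w1 π + b * Vt w2 π := by
    intro a b w w1 w2 ha hb hab hw
    have hcore := core P hP VS VNS VtS VtNS V Vt hsol a b w w1 w2 ha hb hab hw
    have hdV : ∀ γ ∈ Icc (0:ℝ) 1, V w γ - (a * V w1 γ + b * V w2 γ) ≤ 0 :=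
      fun γ hγ => (hcore γ hγ).1
    have hdVt : ∀ γ ∈ Icc (0:ℝ) 1, Vt w γ - (a * Vt w1 γ + b * Vt w2 γ) ≤ 0 :=
      fun γ hγ => (hcore γ hγ).2
    obtain ⟨hS, hNS, htS, htNS⟩ :=
      step P hP VS VNS VtS VtNS V Vt hsol a b w w1 w2 0 hab hdV hdVt π hπ
    have hz : P.β * 0 = 0 := mul_zero _
    have hVVt := hcore π hπ
    exact ⟨by linarith, by linarith, by linarith, by linarith,
      by linarith [hVVt.1], by linarith [hVVt.2]⟩
  have mono : ∀ g : ℝ → ℝ,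
      (∀ a b w w1 w2 : ℝ, 0 ≤ a → 0 ≤ b → a + b = 1 → w ≤ a * w1 + b * w2 →
        g w ≤ a * g w1 + b * g w2) →
      Monotone g ∧ ConvexOn ℝ univ g := by
    intro g hg
    constructor
    · intro u v huv
      have := hg 1 0 u v v (by norm_num) le_rfl (by norm_num) (by linarith)
      linarith
    · refine ⟨convex_univ, ?_⟩
      intro x _ y _ p q hp hq hpq
      have := hg p q (p * x + q * y) x y hp hq hpq le_rfl
      simpa [smul_eq_mul] using this
  exact ⟨mono _ (fun a b w w1 w2 ha hb hab hw => (comp a b w w1 w2 ha hb hab hw).1),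
    mono _ (fun a b w w1 w2 ha hb hab hw => (comp a b w w1 w2 ha hb hab hw).2.1),
    mono _ (fun a b w w1 w2 ha hb hab hw => (comp a b w w1 w2 ha hb hab hw).2.2.1),
    mono _ (fun a b w w1 w2 ha hb hab hw => (comp a b w w1 w2 ha hb hab hw).2.2.2.1),
    mono _ (fun a b w w1 w2 ha hb hab hw => (comp a b w w1 w2 ha hb hab hw).2.2.2.2.1),
    mono _ (fun a b w w1 w2 ha hb hab hw => (comp a b w w1 w2 ha hb hab hw).2.2.2.2.2)⟩
end

section
/- (Convexity is preserved by the Bellman play-update.) Let 0 < r0 < r1 < 1, μ0, μ1 ∈ [0,1], β ∈ (0,1) and θ ∈ [0,1], and let f, g : [0,1] → ℝ be convex. Define ρ(π) = π r0 + (1−π) r1, γ11(π) = (π r0 μ0 + (1−π) r1 μ1)/(π r0 + (1−π) r1), γ01(π) = (π(1−r0)μ0 + (1−π)(1−r1)μ1)/(π(1−r0) + (1−π)(1−r1)). Then the function π ↦ ρ(π) + β[ ρ(π){ θ f(γ11(π)) + (1−θ) g(γ11(π)) } + (1−ρ(π)){ θ f(γ01(π)) + (1−θ) g(γ01(π)) }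 ] is convex on [0,1]. -/
open Set

lemma persp (h : ℝ → ℝ) (hh : ConvexOn ℝ (Icc (0:ℝ) 1) h) (a b c d : ℝ)
    (hpos : ∀ π ∈ Icc (0:ℝ) 1, 0 < a*π + b)
    (hmem : ∀ π ∈ Icc (0:ℝ) 1, (c*π + d)/(a*π + b) ∈ Icc (0:ℝ) 1) :
    ConvexOn ℝ (Icc (0:ℝ) 1) (fun π => (a*π + b) * h ((c*π + d)/(a*π + b))) := by
  refine ⟨convex_Icc 0 1, ?_⟩
  intro x hx y hy s t hs ht hst
  have hz : s • x + t • y ∈ Icc (0:ℝ) 1 := (convex_Icc (0:ℝ) 1) hx hy hs ht hst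
  simp only [smul_eq_mul] at *
  have hpx := hpos x hx
  have hpy := hpos y hy
  have hpz := hpos _ hz
  have hpzeq : a*(s*x+t*y) + b = s*(a*x+b) + t*(a*y+b) := by linear_combination (-b)*hst
  have hw1n : 0 ≤ s*(a*x+b) / (a*(s*x+t*y) + b) := div_nonneg (mul_nonneg hs hpx.le) hpz.le
  have hw2n : 0 ≤ t*(a*y+b) / (a*(s*x+t*y) + b) := div_nonneg (mul_nonneg ht hpy.le) hpz.le
  have hwsum : s*(a*x+b) / (a*(s*x+t*y) + b) + t*(a*y+b) / (a*(s*x+t*y) + b) = 1 := by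
    rw [← add_div, ← hpzeq]
    exact div_self hpz.ne'
  have hγx := hmem x hx
  have hγy := hmem y hy
  have e1 : s*(a*x+b)/(a*(s*x+t*y)+b) * ((c*x+d)/(a*x+b))
      = s*(c*x+d)/(a*(s*x+t*y)+b) := by
    rw [div_mul_div_comm, mul_comm s (a*x+b), mul_assoc,
      mul_comm (a*(s*x+t*y)+b) (a*x+b)]
    exact mul_div_mul_left _ _ hpx.ne'
  have e2 : t*(a*y+b)/(a*(s*x+t*y)+b) * ((c*y+d)/(a*y+b))
      = t*(c*y+d)/(a*(s*x+t*y)+b) := by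
    rw [div_mul_div_comm, mul_comm t (a*y+b), mul_assoc,
      mul_comm (a*(s*x+t*y)+b) (a*y+b)]
    exact mul_div_mul_left _ _ hpy.ne'
  have hγz : (c*(s*x+t*y) + d)/(a*(s*x+t*y) + b)
      = s*(a*x+b)/(a*(s*x+t*y)+b) * ((c*x+d)/(a*x+b))
        + t*(a*y+b)/(a*(s*x+t*y)+b) * ((c*y+d)/(a*y+b)) := by
    rw [e1, e2, ← add_div]
    congr 1
    linear_combination (-d)*hst
  have key := hh.2 hγx hγy hw1n hw2n hwsum
  simp only [smul_eq_mul] at key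
  rw [← hγz] at key
  have hmul := mul_le_mul_of_nonneg_left key hpz.le
  have c1 : (a*(s*x+t*y)+b) * (s*(a*x+b)/(a*(s*x+t*y)+b)) = s*(a*x+b) := by
    rw [mul_div_cancel₀ _ hpz.ne']
  have c2 : (a*(s*x+t*y)+b) * (t*(a*y+b)/(a*(s*x+t*y)+b)) = t*(a*y+b) := by
    rw [mul_div_cancel₀ _ hpz.ne']
  calc (a*(s*x+t*y) + b) * h ((c*(s*x+t*y) + d)/(a*(s*x+t*y) + b))
      ≤ (a*(s*x+t*y) + b) * (s*(a*x+b)/(a*(s*x+t*y)+b) * h ((c*x+d)/(a*x+b))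
          + t*(a*y+b)/(a*(s*x+t*y)+b) * h ((c*y+d)/(a*y+b))) := hmul
    _ = s * ((a*x+b) * h ((c*x+d)/(a*x+b))) + t * ((a*y+b) * h ((c*y+d)/(a*y+b))) := by
        rw [mul_add, ← mul_assoc, ← mul_assoc, c1, c2]; ring

/-- **Convexity is preserved by the Bellman play-update.**
Let `0 < r0 < r1 < 1`, `μ0, μ1 ∈ [0,1]`, `β ∈ (0,1)`, `θ ∈ [0,1]`, and let
`f, g : [0,1] → ℝ` be convex.  With `ρ(π) = π r0 + (1−π) r1` and the Bayes updates
`γ11, γ01`, the function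
`π ↦ ρ(π) + β[ρ(π){θ f(γ11(π)) + (1−θ) g(γ11(π))} + (1−ρ(π)){θ f(γ01(π)) + (1−θ) g(γ01(π))}]`
is convex on `[0,1]`. -/
theorem bellman_play_update_convex (r0 r1 μ0 μ1 β θ : ℝ)
    (hr0 : 0 < r0) (hr01 : r0 < r1) (hr1 : r1 < 1)
    (hμ0 : μ0 ∈ Icc (0 : ℝ) 1) (hμ1 : μ1 ∈ Icc (0 : ℝ) 1)
    (hβ0 : 0 < β) (hβ1 : β < 1) (hθ : θ ∈ Icc (0 : ℝ) 1)
    (f g : ℝ → ℝ)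
    (hf : ConvexOn ℝ (Icc (0 : ℝ) 1) f) (hg : ConvexOn ℝ (Icc (0 : ℝ) 1) g) :
    ConvexOn ℝ (Icc (0 : ℝ) 1) (fun π : ℝ =>
      (π * r0 + (1 - π) * r1) +
        β * ((π * r0 + (1 - π) * r1) *
              (θ * f ((π * r0 * μ0 + (1 - π) * r1 * μ1) / (π * r0 + (1 - π) * r1))
                + (1 - θ) * g ((π * r0 * μ0 + (1 - π) * r1 * μ1) / (π * r0 + (1 - π) * r1)))
          + (1 - (π * r0 + (1 - π) * r1)) *
              (θ * f ((π * (1 - r0) * μ0 + (1 - π) * (1 - r1) * μ1) /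
                  (π * (1 - r0) + (1 - π) * (1 - r1)))
                + (1 - θ) * g ((π * (1 - r0) * μ0 + (1 - π) * (1 - r1) * μ1) /
                  (π * (1 - r0) + (1 - π) * (1 - r1)))))) := by
  obtain ⟨hμ00, hμ01⟩ := hμ0
  obtain ⟨hμ10, hμ11⟩ := hμ1
  obtain ⟨hθ0, hθ1⟩ := hθ
  -- the convex "continuation" function
  set h : ℝ → ℝ := fun u => θ * f u + (1 - θ) * g u with hhdef
  have hh : ConvexOn ℝ (Icc (0:ℝ) 1) h := by
    refine ⟨convex_Icc 0 1, ?_⟩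
    intro x hx y hy s t hs ht hst
    have Hf := hf.2 hx hy hs ht hst
    have Hg := hg.2 hx hy hs ht hst
    simp only [smul_eq_mul, hhdef] at *
    nlinarith [mul_le_mul_of_nonneg_left Hf hθ0,
      mul_le_mul_of_nonneg_left Hg (by linarith : (0:ℝ) ≤ 1 - θ)]
  -- first perspective term
  have hpos1 : ∀ π ∈ Icc (0:ℝ) 1, 0 < (r0 - r1)*π + r1 := by
    intro π hπ
    nlinarith [mul_nonneg (by linarith : (0:ℝ) ≤ r1 - r0) (by linarith [hπ.2] : (0:ℝ) ≤ 1 - π)]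
  have hmem1 : ∀ π ∈ Icc (0:ℝ) 1,
      ((r0*μ0 - r1*μ1)*π + r1*μ1)/((r0 - r1)*π + r1) ∈ Icc (0:ℝ) 1 := by
    intro π hπ
    obtain ⟨hπ0, hπ1⟩ := hπ
    have hp := hpos1 π ⟨hπ0, hπ1⟩
    constructor
    · apply div_nonneg _ hp.le
      nlinarith [mul_nonneg (mul_nonneg hπ0 hr0.le) hμ00,
        mul_nonneg (mul_nonneg (by linarith : (0:ℝ) ≤ 1 - π) (by linarith : (0:ℝ) ≤ r1)) hμ10]
    · rw [div_le_one hp]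
      nlinarith [mul_nonneg (mul_nonneg hπ0 hr0.le) (by linarith : (0:ℝ) ≤ 1 - μ0),
        mul_nonneg (mul_nonneg (by linarith : (0:ℝ) ≤ 1 - π) (by linarith : (0:ℝ) ≤ r1))
          (by linarith : (0:ℝ) ≤ 1 - μ1)]
  have P1 := persp h hh (r0 - r1) r1 (r0*μ0 - r1*μ1) (r1*μ1) hpos1 hmem1
  -- second perspective term
  have hpos2 : ∀ π ∈ Icc (0:ℝ) 1, 0 < (r1 - r0)*π + (1 - r1) := by
    intro π hπ
    nlinarith [mul_nonneg (by linarith : (0:ℝ) ≤ r1 - r0) hπ.1]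
  have hmem2 : ∀ π ∈ Icc (0:ℝ) 1,
      (((1 - r0)*μ0 - (1 - r1)*μ1)*π + (1 - r1)*μ1)/((r1 - r0)*π + (1 - r1)) ∈ Icc (0:ℝ) 1 := by
    intro π hπ
    obtain ⟨hπ0, hπ1⟩ := hπ
    have hp := hpos2 π ⟨hπ0, hπ1⟩
    constructor
    · apply div_nonneg _ hp.le
      nlinarith [mul_nonneg (mul_nonneg hπ0 (by linarith : (0:ℝ) ≤ 1 - r0)) hμ00,
        mul_nonneg (mul_nonneg (by linarith : (0:ℝ) ≤ 1 - π) (by linarith : (0:ℝ) ≤ 1 - r1)) hμ10]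
    · rw [div_le_one hp]
      nlinarith [mul_nonneg (mul_nonneg hπ0 (by linarith : (0:ℝ) ≤ 1 - r0))
          (by linarith : (0:ℝ) ≤ 1 - μ0),
        mul_nonneg (mul_nonneg (by linarith : (0:ℝ) ≤ 1 - π) (by linarith : (0:ℝ) ≤ 1 - r1))
          (by linarith : (0:ℝ) ≤ 1 - μ1)]
  have P2 := persp h hh (r1 - r0) (1 - r1) ((1 - r0)*μ0 - (1 - r1)*μ1) ((1 - r1)*μ1) hpos2 hmem2
  -- affine part
  have haff : ConvexOn ℝ (Icc (0:ℝ) 1) (fun π : ℝ => π * r0 + (1 - π) * r1) := by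
    refine ⟨convex_Icc 0 1, ?_⟩
    intro x hx y hy s t hs ht hst
    simp only [smul_eq_mul]
    exact le_of_eq (by linear_combination (-r1)*hst)
  have total := haff.add ((P1.add P2).smul hβ0.le)
  -- identify the target function with `total`'s function
  have hEq : (fun π : ℝ =>
      (π * r0 + (1 - π) * r1) +
        β * ((π * r0 + (1 - π) * r1) *
              (θ * f ((π * r0 * μ0 + (1 - π) * r1 * μ1) / (π * r0 + (1 - π) * r1))
                + (1 - θ) * g ((π * r0 * μ0 + (1 - π) * r1 * μ1) / (π * r0 + (1 - π) * r1)))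
          + (1 - (π * r0 + (1 - π) * r1)) *
              (θ * f ((π * (1 - r0) * μ0 + (1 - π) * (1 - r1) * μ1) /
                  (π * (1 - r0) + (1 - π) * (1 - r1)))
                + (1 - θ) * g ((π * (1 - r0) * μ0 + (1 - π) * (1 - r1) * μ1) /
                  (π * (1 - r0) + (1 - π) * (1 - r1))))))
      = ((fun π : ℝ => π * r0 + (1 - π) * r1) +
          β • ((fun π : ℝ => ((r0 - r1)*π + r1) *
                  h (((r0*μ0 - r1*μ1)*π + r1*μ1)/((r0 - r1)*π + r1)))
            + (fun π : ℝ => ((r1 - r0)*π + (1 - r1)) *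
                  h ((((1 - r0)*μ0 - (1 - r1)*μ1)*π + (1 - r1)*μ1)/((r1 - r0)*π + (1 - r1)))))) := by
    funext π
    simp only [Pi.add_apply, Pi.smul_apply, smul_eq_mul, hhdef]
    rw [show (1 : ℝ) - (π * r0 + (1 - π) * r1) = (r1 - r0)*π + (1 - r1) by ring,
      show π * r0 * μ0 + (1 - π) * r1 * μ1 = (r0*μ0 - r1*μ1)*π + r1*μ1 by ring,
      show π * (1 - r0) * μ0 + (1 - π) * (1 - r1) * μ1
          = ((1 - r0)*μ0 - (1 - r1)*μ1)*π + (1 - r1)*μ1 by ring,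
      show π * (1 - r0) + (1 - π) * (1 - r1) = (r1 - r0)*π + (1 - r1) by ring,
      show π * r0 + (1 - π) * r1 = (r0 - r1)*π + r1 by ring]
  rw [hEq]
  exact total
end
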